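/- If a decomposition of a chemical reaction network is incidence independent, then any coarsening of the decomposition is incidence independent. -/

import Mathlib

open scoped Classical

noncomputable section

/-- A reaction: an ordered pair (reactant complex, product complex) of vectors in ℝ^S. -/
abbrev Rxn (S : Type*) := (S → ℝ) × (S → ℝ)

variable {S : Type*} [Fintype S]

/-- The set of complexes occurring in a reaction set. -/
def complexesOf (R : Finset (Rxn S)) : Finset (S → ℝ) :=
  R.image Prod.fst ∪ R.image Prod.snd

/-- `(C, R)` is a chemical reaction network on the species set `S`:
complexes have nonnegative integer coordinates, reactions go between complexes,
no reaction is a loop, and every complex occurs in at least one reaction. -/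
def IsCRN (C : Finset (S → ℝ)) (R : Finset (Rxn S)) : Prop :=
  C.Nonempty ∧ R.Nonempty ∧
  (∀ y ∈ C, ∀ s, ∃ n : ℕ, y s = (n : ℝ)) ∧
  (∀ r ∈ R, r.1 ∈ C ∧ r.2 ∈ C) ∧
  (∀ r ∈ R, r.1 ≠ r.2) ∧
  (∀ y ∈ C, ∃ r ∈ R, r.1 = y ∨ r.2 = y)

/-- The stoichiometric subspace `span {y' - y : (y, y') ∈ R}`. -/
def stoichSubspace (R : Finset (Rxn S)) : Submodule ℝ (S → ℝ) :=
  Submodule.span ℝ ((fun r : Rxn S => r.2 - r.1) '' ↑R)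

/-- The rank `s = dim S` of the network. -/
def crnRank (R : Finset (Rxn S)) : ℕ := Module.finrank ℝ (stoichSubspace R)

/-- The standard basis vector `ω_y` of the complex space `ℝ^C` (realized inside
the space of real-valued functions on complexes). -/
def omegaC (y : S → ℝ) : (S → ℝ) → ℝ := fun z => if z = y then 1 else 0

/-- The image of the incidence map `I_a`, i.e. the span of the vectors
`ω_{y'} - ω_y` over reactions `y → y'`. -/
def incImage (R : Finset (Rxn S)) : Submodule ℝ ((S → ℝ) → ℝ) :=
  Submodule.span ℝ ((fun r : Rxn S => omegaC r.2 - omegaC r.1) '' ↑R)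

/-- The underlying undirected graph of `(C, R)`, on the complexes occurring in `R`. -/
def linkGraph (R : Finset (Rxn S)) : SimpleGraph {y : S → ℝ // y ∈ complexesOf R} where
  Adj a b := a ≠ b ∧ ((a.1, b.1) ∈ R ∨ (b.1, a.1) ∈ R)
  symm := ⟨fun a b h => ⟨h.1.symm, h.2.symm⟩⟩
  loopless := ⟨fun a h => h.1 rfl⟩

/-- `n`, the number of complexes. -/
def numComplexes (R : Finset (Rxn S)) : ℕ := (complexesOf R).card

/-- `l`, the number of linkage classes (connected components of the
underlying undirected graph). -/
def numLinkageClasses (R : Finset (Rxn S)) : ℕ :=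
  Nat.card (linkGraph R).ConnectedComponent

/-- The deficiency `δ = n - l - s` (as an integer). -/
def deficiency (R : Finset (Rxn S)) : ℤ :=
  (numComplexes R : ℤ) - (numLinkageClasses R : ℤ) - (crnRank R : ℤ)

/-- A covering of the reaction set `R`: a family of subsets of `R` whose union is `R`. -/
def IsCovering {ι : Type*} (R : Finset (Rxn S)) (f : ι → Finset (Rxn S)) : Prop :=
  (∀ i, f i ⊆ R) ∧ ∀ r ∈ R, ∃ i, r ∈ f i

/-- A decomposition of the reaction set `R`: a partition of `R` into nonempty subsets. -/
def IsDecomposition {ι : Type*} (R : Finset (Rxn S)) (f : ι → Finset (Rxn S)) : Prop :=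
  (∀ i, (f i).Nonempty) ∧ (Pairwise fun i j => Disjoint (f i) (f j)) ∧
  (∀ i, f i ⊆ R) ∧ (∀ r ∈ R, ∃ i, r ∈ f i)

/-- Independence: the stoichiometric subspace is the direct sum of those of the subnetworks. -/
def IsIndependent {ι : Type*} (R : Finset (Rxn S)) (f : ι → Finset (Rxn S)) : Prop :=
  (⨆ i, stoichSubspace (f i)) = stoichSubspace R ∧
  iSupIndep fun i => stoichSubspace (f i)

/-- Incidence independence: the image of the incidence map is the direct sum of the
images of the incidence maps of the subnetworks. -/
def IsIncidenceIndependent {ι : Type*} (R : Finset (Rxn S)) (f : ι → Finset (Rxn S)) : Prop :=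
  (⨆ i, incImage (f i)) = incImage R ∧
  iSupIndep fun i => incImage (f i)

/-- A `𝒞`-decomposition: the complex sets of the subnetworks are pairwise disjoint. -/
def CDisjoint {ι : Type*} (f : ι → Finset (Rxn S)) : Prop :=
  Pairwise fun i j => Disjoint (complexesOf (f i)) (complexesOf (f j))

/-- The set of nonzero complexes of a reaction set. -/
def nonzeroComplexesOf (R : Finset (Rxn S)) : Finset (S → ℝ) := (complexesOf R).erase 0

/-- A `𝒞*`-decomposition: the sets of nonzero complexes are pairwise disjoint. -/
def CstarDisjoint {ι : Type*} (f : ι → Finset (Rxn S)) : Prop :=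
  Pairwise fun i j => Disjoint (nonzeroComplexesOf (f i)) (nonzeroComplexesOf (f j))

/-- A coarsening: each block of `f` is contained in exactly one block of `g`. -/
def IsCoarsening {ι κ : Type*} (f : ι → Finset (Rxn S)) (g : κ → Finset (Rxn S)) : Prop :=
  ∀ i, ∃! j, f i ⊆ g j

/-- Undirected reachability in the graph `(C, R)`. -/
def undirReach (R : Finset (Rxn S)) : (S → ℝ) → (S → ℝ) → Prop :=
  Relation.ReflTransGen fun y z => (y, z) ∈ R ∨ (z, y) ∈ R

/-- Directed reachability in the digraph `(C, R)`. -/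
def dirReach (R : Finset (Rxn S)) : (S → ℝ) → (S → ℝ) → Prop :=
  Relation.ReflTransGen fun y z => (y, z) ∈ R

/-- Weak reversibility: every connected component of the directed graph `(C, R)`
is strongly connected. -/
def WeaklyReversible (R : Finset (Rxn S)) : Prop :=
  ∀ y z, undirReach R y z → dirReach R y z

/-- The set of complex balanced equilibria `Z₊(N, K)` of a kinetics `K` on the
(sub)network with reaction set `R`: positive vectors `x` with `I_a K(x) = 0`. -/
def Zplus (R : Finset (Rxn S)) (K : (S → ℝ) → Rxn S → ℝ) : Set (S → ℝ) :=
  {x | (∀ s, 0 < x s) ∧ ∑ r ∈ R, K x r • (omegaC r.2 - omegaC r.1) = 0}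

/-- The reactions lying in the linkage class of the zero complex. -/
def zeroLinkReactions (R : Finset (Rxn S)) : Finset (Rxn S) :=
  R.filter fun r => undirReach R 0 r.1

/-- The reaction set of the linkage class `c`: all reactions whose complexes lie in `c`. -/
def lcReactions (R : Finset (Rxn S)) (c : (linkGraph R).ConnectedComponent) :
    Finset (Rxn S) :=
  R.filter fun r => ∃ h : r.1 ∈ complexesOf R, (linkGraph R).connectedComponentMk ⟨r.1, h⟩ = c

/-- The network has independent linkage classes (ILC): the linkage class
decomposition is independent. -/
def HasILC (R : Finset (Rxn S)) : Prop := IsIndependent R (lcReactions R)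


/-- Sups of an `iSupIndep` family over incompatible predicates are disjoint. -/
lemma biSup_disjoint_of_iSupIndep {ι : Type*} {M : Type*} [AddCommGroup M] [Module ℝ M]
    {V : ι → Submodule ℝ M} (h : iSupIndep V) (p q : ι → Prop)
    (hpq : ∀ i, p i → q i → False) :
    Disjoint (⨆ i, ⨆ _ : p i, V i) (⨆ i, ⨆ _ : q i, V i) := by
  classical
  rw [Submodule.disjoint_def]
  intro x hxp hxq
  rw [Submodule.mem_biSup_iff_exists_dfinsupp] at hxp hxq
  obtain ⟨a, ha⟩ := hxp
  obtain ⟨b, hb⟩ := hxq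
  have hinj := h.dfinsupp_lsum_injective
  have hab : a.filter p = b.filter q := hinj (ha.trans hb.symm)
  have hz : a.filter p = 0 := by
    ext i
    by_cases hp : p i
    · by_cases hq : q i
      · exact absurd hq (fun hq => hpq i hp hq)
      · have := congrFun (congrArg DFunLike.coe hab) i
        simpa [DFinsupp.filter_apply, hp, hq] using this
    · simp [DFinsupp.filter_apply, hp]
  rw [hz] at ha
  simpa using ha.symm

/-- Grouping an `iSupIndep` family along a map keeps it `iSupIndep`. -/
lemma iSupIndep.group {ι κ : Type*} {M : Type*} [AddCommGroup M] [Module ℝ M]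
    {V : ι → Submodule ℝ M} (h : iSupIndep V) (σ : ι → κ) :
    iSupIndep fun j => ⨆ i, ⨆ _ : σ i = j, V i := by
  intro j
  refine Disjoint.mono_right ?_
    (biSup_disjoint_of_iSupIndep h (fun i => σ i = j) (fun i => σ i ≠ j)
      (fun i h1 h2 => h2 h1))
  refine iSup_le fun j' => iSup_le fun hj' => ?_
  exact iSup_le fun i => iSup_le fun hi => le_iSup_of_le i (by simp [hi, hj'])

/-- any coarsening of an incidence independent decomposition is
incidence independent. -/
theorem stmt_4 (C : Finset (S → ℝ)) (R : Finset (Rxn S)) {k k' : ℕ}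
    (f : Fin k → Finset (Rxn S)) (g : Fin k' → Finset (Rxn S))
    (hcrn : IsCRN C R) (hf : IsDecomposition R f) (hg : IsDecomposition R g)
    (hcoarse : IsCoarsening f g) (hinc : IsIncidenceIndependent R f) :
    IsIncidenceIndependent R g := by
  classical
  choose σ hσ hσu using hcoarse
  -- each block of g is the union of the blocks of f mapping to it
  have hgset : ∀ j, (↑(g j) : Set (Rxn S)) = ⋃ i ∈ {i | σ i = j}, (↑(f i) : Set (Rxn S)) := by
    intro j
    ext r
    simp only [Set.mem_iUnion, Set.mem_setOf_eq, Finset.mem_coe]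
    constructor
    · intro hr
      obtain ⟨i, hi⟩ := hf.2.2.2 r (hg.2.2.1 j hr)
      refine ⟨i, ?_, hi⟩
      by_contra hne
      exact (Finset.disjoint_left.mp (hg.2.1 hne) (hσ i hi) hr).elim
    · rintro ⟨i, hij, hi⟩
      exact hij ▸ hσ i hi
  have hkey : ∀ j, incImage (g j) = ⨆ i, ⨆ _ : σ i = j, incImage (f i) := by
    intro j
    unfold incImage
    rw [hgset j, Set.image_iUnion₂]
    rw [Submodule.span_iUnion₂]
    simp only [Set.mem_setOf_eq]
  constructor
  · rw [← hinc.1]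
    simp_rw [hkey]
    rw [iSup_comm]
    refine le_antisymm (iSup_le fun i => ?_) (iSup_le fun i => ?_)
    · exact iSup_le fun j => iSup_le fun hj => le_iSup (fun i => incImage (f i)) i
    · exact le_iSup_of_le i (le_iSup_of_le (σ i) (by simp))
  · have := hinc.2.group σ
    simpa [hkey] using this

end
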